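/- For all nonzero complex numbers s and t, the 12×7 complex matrix A(s, t, t, s, 1, (st)⁻¹, 1) has rank at most 5; that is, the braid component Π₃ = Π(14|23|68) = {(s, t, t, s, 1, (st)⁻¹, 1, (st)⁻¹) : s, t ∈ ℂ*} is contained in the first characteristic variety V₁(D). -/

import Mathlib

open Matrix

/-- The Alexander matrix of the fundamental group of the complement of the
deconed deleted B₃ arrangement, evaluated at `(t₁, …, t₇)`. -/
noncomputable def alexD (t₁ t₂ t₃ t₄ t₅ t₆ t₇ : ℂ) : Matrix (Fin 12) (Fin 7) ℂ :=
  !![1 - t₅, 0, 0, 0, t₁ - 1, 0, 0;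
     0, t₅ * (t₃ - 1), 1 - t₂ * t₅, 0, t₃ - 1, 0, 0;
     0, 1 - t₅, t₂ * (1 - t₅), 0, t₂ * t₃ - 1, 0, 0;
     0, 0, 0, 1 - t₅, t₄ - 1, 0, 0;
     t₆ * (t₃ - 1), (t₃ - 1) * (t₁ * t₆ - 1), t₂ * (1 - t₁ * t₆), 0, 0, t₃ - 1, 0;
     1 - t₆, t₁ * (t₃ - 1) * (t₆ - 1), t₁ * t₂ * (1 - t₆), 0, 0, t₁ * t₃ - 1, 0;
     0, t₆ * (t₄ - 1), 0, 1 - t₂ * t₆, 0, t₄ - 1, 0;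
     0, 1 - t₆, 0, t₂ * (1 - t₆), 0, t₂ * t₄ - 1, 0;
     t₇ * (t₄ - 1), (t₄ - 1) * (t₁ * t₇ - 1), 0, t₂ * (1 - t₁ * t₇), 0, 0, t₄ - 1;
     1 - t₇, t₁ * (1 - t₇), 0, t₁ * t₂ * (1 - t₇), 0, 0, t₁ * t₂ * t₄ - 1;
     0, 1 - t₇, 0, 0, 0, 0, t₂ - 1;
     0, 0, 1 - t₇, (t₃ - 1) * (1 - t₇), 0, 0, t₄ * (t₃ - 1)]

/-- The `d`-th characteristic variety of the deleted B₃ arrangement `D`: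
points `x` of the algebraic torus `(ℂ*)⁸` such that `(x₁,…,x₇) ∈ V_d(D*)`,
i.e. `rank A(x₁,…,x₇) < 7 - d`, and `x₁x₂⋯x₈ = 1`. -/
noncomputable def VD (d : ℕ) : Set (Fin 8 → ℂ) :=
  {x | (∀ i, x i ≠ 0) ∧
       (alexD (x 0) (x 1) (x 2) (x 3) (x 4) (x 5) (x 6)).rank < 7 - d ∧
       x 0 * x 1 * x 2 * x 3 * x 4 * x 5 * x 6 * x 7 = 1}

/-- If a `12 × 7` matrix has two linearly independent vectors in its kernel,
its rank is at most `5`. -/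
lemma rank_le_five_of_two_ker (A : Matrix (Fin 12) (Fin 7) ℂ) (v w : Fin 7 → ℂ)
    (hv : A.mulVec v = 0) (hw : A.mulVec w = 0)
    (hind : LinearIndependent ℂ ![v, w]) : A.rank ≤ 5 := by
  have hspan : Submodule.span ℂ (Set.range ![v, w]) ≤ LinearMap.ker A.mulVecLin := by
    rw [Submodule.span_le]
    rintro x ⟨i, rfl⟩
    fin_cases i <;> simp [LinearMap.mem_ker, Matrix.mulVecLin_apply, hv, hw]
  have h2 : 2 ≤ Module.finrank ℂ (LinearMap.ker A.mulVecLin) := by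
    have := Submodule.finrank_mono hspan
    rwa [finrank_span_eq_card hind, Fintype.card_fin] at this
  have hrk := A.mulVecLin.finrank_range_add_finrank_ker
  have hdom : Module.finrank ℂ (Fin 7 → ℂ) = 7 := by simp
  rw [hdom] at hrk
  have hA : A.rank = Module.finrank ℂ (LinearMap.range A.mulVecLin) := rfl
  omega

/-- the braid component `Π₃ = Π(14|23|68)` is contained in `V₁(D)`. -/
theorem braid_component_Pi3_in_V1 (s t : ℂ) (hs : s ≠ 0) (ht : t ≠ 0) :
    (alexD s t t s 1 ((s * t)⁻¹) 1).rank ≤ 5 ∧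
    (![s, t, t, s, 1, (s * t)⁻¹, 1, (s * t)⁻¹] : Fin 8 → ℂ) ∈ VD 1 := by
  have hst : s * t ≠ 0 := mul_ne_zero hs ht
  have hzero : (0 : Fin 12 → ℂ) = ![0,0,0,0,0,0,0,0,0,0,0,0] := by
    funext i; fin_cases i <;> rfl
  have hv : (alexD s t t s 1 ((s * t)⁻¹) 1).mulVec ![s * t, -t, -t, 1, 0, 0, 0] = 0 := by
    rw [hzero]
    simp only [alexD, Matrix.cons_mulVec, Matrix.cons_dotProduct, Matrix.dotProduct_of_isEmpty,
      Matrix.empty_mulVec, Matrix.head_cons, Matrix.tail_cons]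
    simp only [Matrix.vecCons, Fin.cons_inj, and_true]
    and_intros
    all_goals try ring
    all_goals field_simp
    all_goals ring
  have hw : (alexD s t t s 1 ((s * t)⁻¹) 1).mulVec
      ![s * t * (s - 1), -(s * t), -(s * t), 0, 0, 1, 0] = 0 := by
    rw [hzero]
    simp only [alexD, Matrix.cons_mulVec, Matrix.cons_dotProduct, Matrix.dotProduct_of_isEmpty,
      Matrix.empty_mulVec, Matrix.head_cons, Matrix.tail_cons]
    simp only [Matrix.vecCons, Fin.cons_inj, and_true]
    and_intros
    all_goals try ring
    all_goals field_simp
    all_goals try ring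
  have hind : LinearIndependent ℂ
      ![![s * t, -t, -t, 1, 0, 0, 0], ![s * t * (s - 1), -(s * t), -(s * t), 0, 0, 1, 0]] := by
    rw [LinearIndependent.pair_iff]
    intro a b hab
    have h3 : a * 1 + b * 0 = 0 := congrFun hab 3
    have h5 : a * 0 + b * 1 = 0 := congrFun hab 5
    constructor
    · linear_combination h3
    · linear_combination h5
  have hrank : (alexD s t t s 1 ((s * t)⁻¹) 1).rank ≤ 5 :=
    rank_le_five_of_two_ker _ _ _ hv hw hind
  refine ⟨hrank, ?_, ?_, ?_⟩
  · intro i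
    fin_cases i
    · exact hs
    · exact ht
    · exact ht
    · exact hs
    · exact one_ne_zero
    · exact inv_ne_zero hst
    · exact one_ne_zero
    · exact inv_ne_zero hst
  · show (alexD s t t s 1 ((s * t)⁻¹) 1).rank < 7 - 1
    omega
  · show s * t * t * s * 1 * (s * t)⁻¹ * 1 * (s * t)⁻¹ = 1
    field_simp
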